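/- arXiv:1703.05858 — 4 statements merged into one kernel-verified Lean document; each statement's English description precedes it below -/
import Mathlib

section
/- Suppose Γ and Γ' are connected simple graphs each with at least two vertices. If both are bipartite, then the direct product Γ × Γ' has exactly two connected components; if at least one is non-bipartite, then Γ × Γ' is connected. (Weichsel's Theorem.) -/
/-- The direct (tensor/categorical) product of simple graphs: `(v,v')` is adjacent
to `(u,u')` iff `v ~ u` and `v' ~ u'`. -/
def SimpleGraph.directProd {α β : Type} (G : SimpleGraph α) (H : SimpleGraph β) :
    SimpleGraph (α × β) where
  Adj a b := G.Adj a.1 b.1 ∧ H.Adj a.2 b.2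
  symm := ⟨fun a b h => ⟨G.adj_symm h.1, H.adj_symm h.2⟩⟩
  loopless := ⟨fun a h => G.irrefl h.1⟩

namespace WeichselAux

open SimpleGraph

variable {α β : Type} {G : SimpleGraph α} {H : SimpleGraph β}

lemma exists_neighbor (hG : G.Connected) [Nontrivial α] (a : α) : ∃ e, G.Adj a e := by
  obtain ⟨b, hb⟩ := exists_ne a
  obtain ⟨p⟩ := hG.preconnected a b
  cases p with
  | nil => exact absurd rfl hb
  | cons h _ => exact ⟨_, h⟩

lemma pad {a c : α} (hn : ∃ e, G.Adj a e) (p : G.Walk a c) (k : ℕ) :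
    ∃ p' : G.Walk a c, p'.length = p.length + 2 * k := by
  obtain ⟨e, he⟩ := hn
  induction k with
  | zero => exact ⟨p, by ring⟩
  | succ k ih =>
      obtain ⟨p', hp'⟩ := ih
      exact ⟨.cons he (.cons he.symm p'), by simp [hp']; ring⟩

lemma reachable_prod (G : SimpleGraph α) (H : SimpleGraph β) :
    ∀ (n : ℕ) {a c : α} {b d : β} (p : G.Walk a c) (q : H.Walk b d),
    p.length = n → q.length = n → (G.directProd H).Reachable (a, b) (c, d) := by
  intro n
  induction n with
  | zero =>
      intro a c b d p q hp hq
      cases p with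
      | nil =>
          cases q with
          | nil => exact Reachable.refl _
          | cons _ _ => simp at hq
      | cons _ _ => simp at hp
  | succ n ih =>
      intro a c b d p q hp hq
      cases p with
      | nil => simp at hp
      | cons h p' =>
          cases q with
          | nil => simp at hq
          | cons h' q' =>
              refine ((?_ : (G.directProd H).Adj (a, b) (_, _)).reachable).trans
                (ih p' q' (by simpa using hp) (by simpa using hq))
              exact ⟨h, h'⟩

lemma reachable_of_parity {a c : α} {b d : β}
    (hnG : ∃ e, G.Adj a e) (hnH : ∃ e, H.Adj b e)
    (p : G.Walk a c) (q : H.Walk b d) (hpar : p.length % 2 = q.length % 2) :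
    (G.directProd H).Reachable (a, b) (c, d) := by
  rcases le_total p.length q.length with hle | hle
  · obtain ⟨p', hp'⟩ := pad hnG p ((q.length - p.length) / 2)
    exact reachable_prod G H q.length p' q (by omega) rfl
  · obtain ⟨q', hq'⟩ := pad hnH q ((p.length - q.length) / 2)
    exact reachable_prod G H p.length p q' rfl (by omega)

lemma exists_walks_of_reachable {x y : α × β}
    (h : (G.directProd H).Reachable x y) :
    ∃ (p : G.Walk x.1 y.1) (q : H.Walk x.2 y.2), p.length = q.length := by
  obtain ⟨w⟩ := h
  induction w with
  | nil => exact ⟨.nil, .nil, rfl⟩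
  | cons h w ih =>
      obtain ⟨p, q, hpq⟩ := ih
      exact ⟨.cons h.1 p, .cons h.2 q, by simp [hpq]⟩

lemma exists_odd_closed (hG : G.Connected) (h : ¬ G.Colorable 2) :
    ∃ (u : α) (w : G.Walk u u), Odd w.length := by
  classical
  by_contra hc
  push_neg at hc
  apply h
  obtain ⟨v₀⟩ := hG.nonempty
  have fact1 : ∀ (a : α) (p p' : G.Walk v₀ a), p.length % 2 = p'.length % 2 := by
    intro a p p'
    have := hc v₀ (p.append p'.reverse)
    rw [Nat.odd_iff] at this
    simp only [Walk.length_append, Walk.length_reverse] at this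
    omega
  let f : α → Bool := fun a => decide (∃ p : G.Walk v₀ a, Odd p.length)
  have valid : ∀ {a b : α}, G.Adj a b → f a ≠ f b := by
    intro a b hab
    obtain ⟨p⟩ := hG.preconnected v₀ a
    have ha : f a = decide (Odd p.length) := by
      simp only [f, decide_eq_decide]
      constructor
      · rintro ⟨p', hp'⟩
        have := fact1 a p p'
        rw [Nat.odd_iff] at hp' ⊢; omega
      · intro hp; exact ⟨p, hp⟩
    have hb : f b = decide (Odd (p.length + 1)) := by
      simp only [f, decide_eq_decide]
      constructor
      · rintro ⟨p', hp'⟩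
        have := fact1 b (p.concat hab) p'
        rw [Walk.length_concat] at this
        rw [Nat.odd_iff] at hp' ⊢; omega
      · intro hp; exact ⟨p.concat hab, by rwa [Walk.length_concat]⟩
    rw [ha, hb]
    by_cases hO : Odd p.length <;> simp [hO, Nat.odd_add_one]
  have C : G.Coloring Bool := Coloring.mk f (fun hab => valid hab)
  simpa using C.colorable

lemma exists_walk_parity (hG : G.Connected)
    (hodd : ∃ (u : α) (w : G.Walk u u), Odd w.length)
    (a c : α) (m : ℕ) : ∃ p : G.Walk a c, p.length % 2 = m % 2 := by
  obtain ⟨u, w, hw⟩ := hodd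
  obtain ⟨p₀⟩ := hG.preconnected a c
  by_cases h : p₀.length % 2 = m % 2
  · exact ⟨p₀, h⟩
  · obtain ⟨r⟩ := hG.preconnected a u
    refine ⟨r.append (w.append (r.reverse.append p₀)), ?_⟩
    simp only [Walk.length_append, Walk.length_reverse]
    rw [Nat.odd_iff] at hw
    omega

end WeichselAux

open SimpleGraph in
/-- Weichsel's theorem: Suppose `G` and `H` are connected simple
graphs each with at least two vertices.  If both are bipartite, then `G × H` has
exactly two connected components; if at least one is non-bipartite, then `G × H`
is connected. -/
theorem weichsel {α β : Type} (G : SimpleGraph α) (H : SimpleGraph β)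
    [Nontrivial α] [Nontrivial β] (hG : G.Connected) (hH : H.Connected) :
    ((G.Colorable 2 ∧ H.Colorable 2) →
      Nat.card (G.directProd H).ConnectedComponent = 2) ∧
    ((¬ G.Colorable 2 ∨ ¬ H.Colorable 2) → (G.directProd H).Connected) := by
  classical
  constructor
  · rintro ⟨⟨cG0⟩, ⟨cH0⟩⟩
    let cG : G.Coloring Bool := G.recolorOfEquiv finTwoEquiv cG0
    let cH : H.Coloring Bool := H.recolorOfEquiv finTwoEquiv cH0
    let f0 : α × β → Bool := fun x => xor (cG x.1) (cH x.2)
    have lemA : ∀ x y : α × β, (G.directProd H).Reachable x y → f0 x = f0 y := by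
      intro x y h
      obtain ⟨p, q, hpq⟩ := WeichselAux.exists_walks_of_reachable h
      have h1 := cG.even_length_iff_congr p
      have h2 := cH.even_length_iff_congr q
      rw [hpq] at h1
      have h3 := h1.symm.trans h2
      simp only [f0]
      revert h3
      generalize cG x.1 = u
      generalize cG y.1 = v
      generalize cH x.2 = s
      generalize cH y.2 = t
      revert u v s t
      decide
    have lemB : ∀ x y : α × β, f0 x = f0 y → (G.directProd H).Reachable x y := by
      intro x y hxy
      obtain ⟨p⟩ := hG.preconnected x.1 y.1
      obtain ⟨q⟩ := hH.preconnected x.2 y.2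
      have h1 := cG.even_length_iff_congr p
      have h2 := cH.even_length_iff_congr q
      have h3 : Even p.length ↔ Even q.length := by
        rw [h1, h2]
        simp only [f0] at hxy
        revert hxy
        generalize cG x.1 = u
        generalize cG y.1 = v
        generalize cH x.2 = s
        generalize cH y.2 = t
        revert u v s t
        decide
      have hpar : p.length % 2 = q.length % 2 := by
        rw [Nat.even_iff, Nat.even_iff] at h3; omega
      have := WeichselAux.reachable_of_parity (WeichselAux.exists_neighbor hG x.1)
        (WeichselAux.exists_neighbor hH x.2) p q hpar
      simpa using this
    let F : (G.directProd H).ConnectedComponent → Bool := Quot.lift f0 lemA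
    have hbij : Function.Bijective F := by
      constructor
      · refine Quot.ind fun x => Quot.ind fun y h => Quot.sound (lemB x y h)
      · intro t
        obtain ⟨a⟩ := hG.nonempty
        obtain ⟨b⟩ := hH.nonempty
        obtain ⟨a', ha'⟩ := WeichselAux.exists_neighbor hG a
        have hne : f0 (a, b) ≠ f0 (a', b) := by
          have hv := cG.valid ha'
          simp only [f0]
          revert hv
          generalize cG a = u
          generalize cG a' = v
          generalize cH b = s
          revert u v s
          decide
        by_cases ht : t = f0 (a, b)
        · exact ⟨Quot.mk _ (a, b), ht.symm⟩
        · refine ⟨Quot.mk _ (a', b), ?_⟩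
          show f0 (a', b) = t
          revert hne ht
          generalize f0 (a, b) = u
          generalize f0 (a', b) = v
          revert u v t
          decide
    rw [Nat.card_eq_of_bijective F hbij]
    simp
  · rintro (h | h)
    · have hodd := WeichselAux.exists_odd_closed hG h
      have hpre : (G.directProd H).Preconnected := by
        rintro ⟨a, b⟩ ⟨c, d⟩
        obtain ⟨q⟩ := hH.preconnected b d
        obtain ⟨p, hp⟩ := WeichselAux.exists_walk_parity hG hodd a c q.length
        exact WeichselAux.reachable_of_parity (WeichselAux.exists_neighbor hG a)
          (WeichselAux.exists_neighbor hH b) p q hp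
      exact SimpleGraph.Connected.mk hpre
    · have hodd := WeichselAux.exists_odd_closed hH h
      have hpre : (G.directProd H).Preconnected := by
        rintro ⟨a, b⟩ ⟨c, d⟩
        obtain ⟨p⟩ := hG.preconnected a c
        obtain ⟨q, hq⟩ := WeichselAux.exists_walk_parity hH hodd b d p.length
        exact WeichselAux.reachable_of_parity (WeichselAux.exists_neighbor hG a)
          (WeichselAux.exists_neighbor hH b) p q hq.symm
      exact SimpleGraph.Connected.mk hpre
end

section
/- Let n ≥ 3, m ≥ 1, and let H ≤ (ℤ/2nℤ)^m be the subgroup generated by S = {(ε₁,…,ε_m) : εᵢ = ±1}. Then H = {(a₁,…,a_m) : a₁ ≡ a₂ ≡ ⋯ ≡ a_m (mod 2)}, and for u = (a₁,…,a_m) ∈ H with representatives aᵢ ∈ {−(n−1),…,n}, the distance from u to 0 in the Cayley graph Cay(H, S) equals max{|a₁|, …, |a_m|}. -/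
/-- The connection set `S = {(ε₁,…,ε_m) : εᵢ = ±1}` in `(ℤ/2nℤ)^m`. -/
def signSet (n m : ℕ) : Set (Fin m → ZMod (2 * n)) :=
  {s | ∀ i, s i = 1 ∨ s i = -1}

/-- The Cayley graph of `(ℤ/2nℤ)^m` with connection set `S`; its restriction to the
subgroup `H` generated by `S` (equivalently, the connected component of `0`) is the
Cayley graph `Cay(H, S)`, and distances between elements of `H` agree with those in
`Cay(H, S)` since every walk from an element of `H` stays in `H`. -/
def cayleySign (n m : ℕ) : SimpleGraph (Fin m → ZMod (2 * n)) where
  Adj x y := x ≠ y ∧ (x - y) ∈ signSet n m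
  symm := by
    refine ⟨?_⟩
    rintro x y ⟨hne, hs⟩
    refine ⟨hne.symm, fun i => ?_⟩
    rcases hs i with h | h
    · right
      have : (y - x) i = -((x - y) i) := by simp [Pi.sub_apply]
      rw [this, h]
    · left
      have : (y - x) i = -((x - y) i) := by simp [Pi.sub_apply]
      rw [this, h]; ring
  loopless := ⟨fun x h => h.1 rfl⟩

/-- `valMinAbs` minimizes `natAbs` among integer representatives. -/
lemma aux_natAbs_valMinAbs_min {N : ℕ} [NeZero N] (x : ZMod N) (z : ℤ)
    (hz : (z : ZMod N) = x) : x.valMinAbs.natAbs ≤ z.natAbs :=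
  ZMod.natAbs_min_of_le_div_two N x.valMinAbs z
    (by rw [ZMod.coe_valMinAbs, hz]) (ZMod.natAbs_valMinAbs_le x)

/-- adding `±1` changes `natAbs ∘ valMinAbs` by at most one. -/
lemma aux_lipschitz {N : ℕ} [NeZero N] (y e : ZMod N) (he : e = 1 ∨ e = -1) :
    (y + e).valMinAbs.natAbs ≤ y.valMinAbs.natAbs + 1 := by
  obtain he | he := he
  · calc (y + e).valMinAbs.natAbs ≤ (y.valMinAbs + 1).natAbs :=
        aux_natAbs_valMinAbs_min _ _
          (by rw [Int.cast_add, ZMod.coe_valMinAbs, Int.cast_one, he])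
      _ ≤ y.valMinAbs.natAbs + 1 := (Int.natAbs_add_le _ _).trans (by simp)
  · calc (y + e).valMinAbs.natAbs ≤ (y.valMinAbs + (-1)).natAbs :=
        aux_natAbs_valMinAbs_min _ _
          (by rw [Int.cast_add, ZMod.coe_valMinAbs, Int.cast_neg, Int.cast_one, he])
      _ ≤ y.valMinAbs.natAbs + 1 := (Int.natAbs_add_le _ _).trans (by simp)

/-- parity of `valMinAbs` agrees with parity of `val` mod an even modulus. -/
lemma aux_valMinAbs_emod_two (n : ℕ) (hn : 1 ≤ n) (x : ZMod (2 * n)) :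
    x.valMinAbs % 2 = (x.val : ℤ) % 2 := by
  haveI : NeZero (2 * n) := ⟨by omega⟩
  rw [ZMod.valMinAbs_def_pos]
  split_ifs with h
  · rfl
  · omega

/-- Decomposition of an element with constant coordinate parity as a sum of
`M = max |aᵢ|` sign vectors. -/
lemma aux_sign_decomp (n m : ℕ) (hn : 3 ≤ n) (hm : 1 ≤ m) (a : Fin m → ZMod (2 * n))
    (ha : ∀ i j, (a i).val % 2 = (a j).val % 2) :
    ∃ s : ℕ → (Fin m → ZMod (2 * n)), (∀ t, s t ∈ signSet n m) ∧
      a = ∑ t ∈ Finset.range (Finset.univ.sup fun i => (a i).valMinAbs.natAbs), s t := by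
  haveI : NeZero (2 * n) := ⟨by omega⟩
  haveI : Nonempty (Fin m) := ⟨⟨0, hm⟩⟩
  set M : ℕ := Finset.univ.sup fun i => (a i).valMinAbs.natAbs with hM
  obtain ⟨i₀, -, hi₀⟩ := Finset.exists_mem_eq_sup Finset.univ Finset.univ_nonempty
      (fun i => (a i).valMinAbs.natAbs)
  have hvp : ∀ i, (a i).valMinAbs % 2 = (a i₀).valMinAbs % 2 := by
    intro i
    have h1 := aux_valMinAbs_emod_two n (by omega) (a i)
    have h2 := aux_valMinAbs_emod_two n (by omega) (a i₀)
    have h3 := ha i i₀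
    omega
  have hle : ∀ i, (a i).valMinAbs.natAbs ≤ M := fun i =>
    Finset.le_sup (f := fun i => (a i).valMinAbs.natAbs) (Finset.mem_univ i)
  have hMn : M = (a i₀).valMinAbs.natAbs := by rw [hM, hi₀]
  have hMi : (M : ℤ) = ((a i₀).valMinAbs.natAbs : ℤ) := by exact_mod_cast hMn
  have hdvd : ∀ i, 2 ∣ (M : ℤ) + (a i).valMinAbs := by
    intro i
    have h1 := hvp i
    have h2 := Int.natAbs_eq (a i₀).valMinAbs
    omega
  set p : Fin m → ℕ := fun i => (((M : ℤ) + (a i).valMinAbs) / 2).toNat with hp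
  have hp2 : ∀ i, 2 * (p i : ℤ) = (M : ℤ) + (a i).valMinAbs := by
    intro i
    have h1 := hdvd i
    have h2 : ((a i).valMinAbs.natAbs : ℤ) ≤ M := by exact_mod_cast hle i
    have h3 := Int.natAbs_eq (a i).valMinAbs
    simp only [hp]
    omega
  have hpM : ∀ i, p i ≤ M := by
    intro i
    have h1 := hp2 i
    have h2 : ((a i).valMinAbs.natAbs : ℤ) ≤ M := by exact_mod_cast hle i
    have h3 := Int.natAbs_eq (a i).valMinAbs
    omega
  refine ⟨fun t i => if t < p i then 1 else -1, fun t i => by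
    dsimp only; split_ifs; exacts [Or.inl rfl, Or.inr rfl], ?_⟩
  funext i
  rw [Finset.sum_apply]
  have hsplit : ∑ t ∈ Finset.range M, (if t < p i then (1 : ZMod (2 * n)) else -1)
      = (p i : ℕ) • (1 : ZMod (2 * n)) + (M - p i : ℕ) • (-1 : ZMod (2 * n)) := by
    rw [Finset.range_eq_Ico, ← Finset.sum_Ico_consecutive _ (Nat.zero_le (p i)) (hpM i)]
    rw [Finset.sum_congr rfl (g := fun _ => (1 : ZMod (2 * n)))
        (fun t ht => if_pos (Finset.mem_Ico.mp ht).2),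
      Finset.sum_congr rfl (g := fun _ => (-1 : ZMod (2 * n)))
        (fun t ht => if_neg (by
          have := (Finset.mem_Ico.mp ht).1; omega))]
    rw [Finset.sum_const, Finset.sum_const, Nat.card_Ico, Nat.card_Ico, Nat.sub_zero]
  rw [hsplit]
  have h2 := hp2 i
  have hm' := hpM i
  have hv : (a i).valMinAbs = 2 * (p i : ℤ) - (M : ℤ) := by omega
  have : ((a i).valMinAbs : ZMod (2 * n)) = a i := ZMod.coe_valMinAbs _
  rw [← this, hv]
  simp only [nsmul_eq_mul, mul_one, mul_neg, Nat.cast_sub hm']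
  push_cast
  ring

/-- From a sign-vector decomposition of length `k`, build a walk of length `k` to `0`. -/
lemma aux_walk_of_sum (n m : ℕ) (hn : 3 ≤ n) (hm : 1 ≤ m) :
    ∀ (k : ℕ) (s : ℕ → Fin m → ZMod (2 * n)), (∀ t, s t ∈ signSet n m) →
      ∀ a : Fin m → ZMod (2 * n), a = ∑ t ∈ Finset.range k, s t →
        ∃ w : (cayleySign n m).Walk a 0, w.length = k := by
  haveI : Fact (1 < 2 * n) := ⟨by omega⟩
  intro k
  induction k with
  | zero =>
    intro s hs a ha
    obtain rfl : a = 0 := by simpa using ha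
    exact ⟨SimpleGraph.Walk.nil, rfl⟩
  | succ k ih =>
    intro s hs a ha
    obtain ⟨w, hw⟩ := ih s hs (∑ t ∈ Finset.range k, s t) rfl
    have hdiff : a - ∑ t ∈ Finset.range k, s t = s k := by
      rw [ha, Finset.sum_range_succ]; abel
    have hadj : (cayleySign n m).Adj a (∑ t ∈ Finset.range k, s t) := by
      refine ⟨?_, by rw [hdiff]; exact hs k⟩
      intro h
      have h0 : s k ⟨0, hm⟩ = 0 := by
        rw [← hdiff, h, sub_self]; rfl
      rcases hs k ⟨0, hm⟩ with h1 | h1 <;> rw [h1] at h0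
      · exact one_ne_zero h0
      · exact one_ne_zero (neg_eq_zero.mp h0)
    exact ⟨SimpleGraph.Walk.cons hadj w, by simp [hw]⟩

/-- Along any walk, each coordinate's `valMinAbs` changes by at most one per step. -/
lemma aux_lower_bound (n m : ℕ) (hn : 3 ≤ n) :
    ∀ {a b : Fin m → ZMod (2 * n)} (w : (cayleySign n m).Walk a b) (i : Fin m),
      (a i).valMinAbs.natAbs ≤ (b i).valMinAbs.natAbs + w.length := by
  haveI : NeZero (2 * n) := ⟨by omega⟩
  intro a b w
  induction w with
  | nil => intro i; simp
  | @cons a c b h w ih =>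
    intro i
    obtain ⟨hne, hs⟩ := id h
    have hb := ih i
    have hstep : (a i).valMinAbs.natAbs ≤ (c i).valMinAbs.natAbs + 1 := by
      have hrw : a i = c i + (a - c) i := by simp
      rw [hrw]
      exact aux_lipschitz _ _ (hs i)
    simp only [SimpleGraph.Walk.length_cons]
    omega

/-- Let `n ≥ 3`, `m ≥ 1`, and let `H ≤ (ℤ/2nℤ)^m` be the subgroup
generated by `S = {(ε₁,…,ε_m) : εᵢ = ±1}`.  Then `H = {(a₁,…,a_m) : a₁ ≡ ⋯ ≡ a_m (mod 2)}`,
and for `u = (a₁,…,a_m) ∈ H`, with each `aᵢ` represented by the unique integer in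
`(−n, n]` (via `ZMod.valMinAbs`), the distance from `u` to `0` in the Cayley graph
`Cay(H, S)` equals `max{|a₁|, …, |a_m|}`. -/
theorem cayley_sign_closure_and_dist (n m : ℕ) (hn : 3 ≤ n) (hm : 1 ≤ m) :
    (∀ a : Fin m → ZMod (2 * n),
      a ∈ AddSubgroup.closure (signSet n m) ↔
        ∀ i j, (a i).val % 2 = (a j).val % 2) ∧
    (∀ a : Fin m → ZMod (2 * n), (∀ i j, (a i).val % 2 = (a j).val % 2) →
      (cayleySign n m).dist a 0 =
        Finset.univ.sup fun i => (a i).valMinAbs.natAbs) := by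
  haveI : NeZero (2 * n) := ⟨by omega⟩
  haveI : Fact (1 < 2 * n) := ⟨by omega⟩
  haveI : Nonempty (Fin m) := ⟨⟨0, hm⟩⟩
  have hdvd2 : (2 : ℕ) ∣ 2 * n := Dvd.intro n rfl
  set φ : ZMod (2 * n) →+* ZMod 2 := ZMod.castHom hdvd2 (ZMod 2) with hφ
  have key : ∀ x y : ZMod (2 * n), φ x = φ y ↔ x.val % 2 = y.val % 2 := by
    intro x y
    simp only [hφ, ZMod.castHom_apply]
    rw [← ZMod.natCast_val, ← ZMod.natCast_val, ZMod.natCast_eq_natCast_iff']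
  constructor
  · intro a
    constructor
    · intro haH i j
      have H : ∀ i j : Fin m, φ (a i) = φ (a j) := by
        intro i j
        refine AddSubgroup.closure_induction
          (p := fun g _ => ∀ i j : Fin m, φ (g i) = φ (g j)) ?_ ?_ ?_ ?_ haH i j
        · intro x hx i j
          rcases hx i with h | h <;> rcases hx j with h' | h' <;>
            simp only [h, h', map_one, map_neg] <;> decide
        · intro i j; simp
        · intro x y hx hy hx' hy' i j
          simp only [Pi.add_apply, map_add, hx' i j, hy' i j]
        · intro x hx hx' i j
          simp only [Pi.neg_apply, map_neg, hx' i j]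
      exact (key _ _).mp (H i j)
    · intro ha
      obtain ⟨s, hs, hsum⟩ := aux_sign_decomp n m hn hm a ha
      rw [hsum]
      exact AddSubgroup.sum_mem _ fun t _ => AddSubgroup.subset_closure (hs t)
  · intro a ha
    obtain ⟨s, hs, hsum⟩ := aux_sign_decomp n m hn hm a ha
    obtain ⟨w, hw⟩ := aux_walk_of_sum n m hn hm _ s hs a hsum
    have hub : (cayleySign n m).dist a 0 ≤
        Finset.univ.sup fun i => (a i).valMinAbs.natAbs := by
      calc (cayleySign n m).dist a 0 ≤ w.length := SimpleGraph.dist_le w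
        _ = _ := hw
    have hreach : (cayleySign n m).Reachable a 0 := ⟨w⟩
    obtain ⟨w', hw'⟩ := hreach.exists_walk_length_eq_dist
    have hlb : (Finset.univ.sup fun i => (a i).valMinAbs.natAbs) ≤
        (cayleySign n m).dist a 0 := by
      refine Finset.sup_le fun i _ => ?_
      have := aux_lower_bound n m hn w' i
      simpa [hw'] using this
    omega
end

section
/- Let n ≥ 3, m ≥ 1, and let Γ be the connected component containing the vertex v = (0,…,0) of the tensor (direct) product of m cycles each of length 2n. If an automorphism of Γ fixes v and all 2^m neighbours (±1, ±1, …, ±1) of v, then it is the identity. (The graph Γ is rigid at v.) -/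
/-- The tensor (direct) product of `m` cycles of length `2n`: vertices are
`(ℤ/2nℤ)^m`, and `(b₁,…,b_m)` is adjacent to `(c₁,…,c_m)` iff `bᵢ − cᵢ ≡ ±1 (mod 2n)`
for all `i`. -/
def cycleTensor (n m : ℕ) : SimpleGraph (Fin m → ZMod (2 * n)) where
  Adj x y := x ≠ y ∧ ∀ i, x i - y i = 1 ∨ x i - y i = -1
  symm := by
    constructor
    rintro x y ⟨hne, hs⟩
    refine ⟨hne.symm, fun i => ?_⟩
    rcases hs i with h | h
    · right
      have : y i - x i = -(x i - y i) := by ring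
      rw [this, h]
    · left
      have : y i - x i = -(x i - y i) := by ring
      rw [this, h]; ring
  loopless := ⟨fun x h => h.1 rfl⟩

/-- The connected component of `(0,…,0)` in the tensor product of `m` cycles of
length `2n`, as an induced subgraph. -/
noncomputable def cycleTensorComp (n m : ℕ) :
    SimpleGraph (((cycleTensor n m).connectedComponentMk 0).supp) :=
  SimpleGraph.induce (((cycleTensor n m).connectedComponentMk 0).supp) (cycleTensor n m)

/-- Distance to `0` on the cycle `ZMod (2n)`. -/
def cnu (n : ℕ) (a : ZMod (2 * n)) : ℕ := min a.val (2 * n - a.val)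

lemma cstep {n : ℕ} (hn : 3 ≤ n) (a : ZMod (2 * n)) :
    ((a + 1).val = a.val + 1 ∧ a.val + 1 < 2 * n) ∨
      ((a + 1).val = 0 ∧ a.val + 1 = 2 * n) := by
  haveI : NeZero (2 * n) := ⟨by omega⟩
  have h1 : (1 : ZMod (2 * n)).val = 1 := ZMod.val_one'' (by omega)
  have h := ZMod.val_add a 1
  rw [h1] at h
  have hv := ZMod.val_lt a
  rcases lt_or_ge (a.val + 1) (2 * n) with h2 | h2
  · exact Or.inl ⟨by rw [h, Nat.mod_eq_of_lt h2], h2⟩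
  · have h3 : a.val + 1 = 2 * n := by omega
    exact Or.inr ⟨by rw [h, h3, Nat.mod_self], h3⟩

lemma cnu_step {n : ℕ} (hn : 3 ≤ n) (a : ZMod (2 * n)) :
    cnu n (a + 1) = cnu n a + 1 ∨ cnu n a = cnu n (a + 1) + 1 := by
  haveI : NeZero (2 * n) := ⟨by omega⟩
  have hv := ZMod.val_lt a
  have hv2 := ZMod.val_lt (a + 1)
  rcases cstep hn a with h | h <;> unfold cnu <;> omega

lemma cnu_sub_step {n : ℕ} (hn : 3 ≤ n) (a : ZMod (2 * n)) :
    cnu n a = cnu n (a - 1) + 1 ∨ cnu n (a - 1) = cnu n a + 1 := by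
  have := cnu_step hn (a - 1)
  rw [sub_add_cancel] at this
  tauto

lemma cnu_localmin {n : ℕ} (hn : 3 ≤ n) (a : ZMod (2 * n))
    (h1 : cnu n a < cnu n (a + 1)) (h2 : cnu n a < cnu n (a - 1)) :
    cnu n a = 0 := by
  haveI : NeZero (2 * n) := ⟨by omega⟩
  have hv := ZMod.val_lt a
  have hv1 := ZMod.val_lt (a + 1)
  have hv2 := ZMod.val_lt (a - 1)
  have s1 := cstep hn a
  have s2 := cstep hn (a - 1)
  rw [sub_add_cancel] at s2
  unfold cnu at *
  omega

lemma cnu_neg {n : ℕ} (hn : 3 ≤ n) (a : ZMod (2 * n)) :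
    cnu n (-a) = cnu n a := by
  haveI : NeZero (2 * n) := ⟨by omega⟩
  have hv := ZMod.val_lt a
  have h := ZMod.neg_val a
  unfold cnu
  rw [h]
  split_ifs with h0
  · subst h0; simp
  · have : a.val ≠ 0 := fun hh => h0 ((ZMod.val_eq_zero a).mp hh)
    omega

lemma cnu_decrease {n k : ℕ} (hn : 3 ≤ n) (hk : 1 ≤ k) (a : ZMod (2 * n))
    (ha : cnu n a ≤ k + 1) :
    ∃ c, (c = a + 1 ∨ c = a - 1) ∧ cnu n c ≤ k := by
  rcases cnu_step hn a with h | h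
  · rcases cnu_sub_step hn a with h' | h'
    · exact ⟨a - 1, Or.inr rfl, by omega⟩
    · have h0 : cnu n a = 0 := cnu_localmin hn a (by omega) (by omega)
      exact ⟨a + 1, Or.inl rfl, by omega⟩
  · exact ⟨a + 1, Or.inl rfl, by omega⟩

lemma cnu_eq_one {n : ℕ} (hn : 3 ≤ n) (a : ZMod (2 * n)) (h : cnu n a = 1) :
    a = 1 ∨ a = -1 := by
  haveI : NeZero (2 * n) := ⟨by omega⟩
  have hv := ZMod.val_lt a
  unfold cnu at h
  have : a.val = 1 ∨ a.val = 2 * n - 1 := by omega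
  rcases this with h1 | h1
  · left
    rw [← a.natCast_zmod_val, h1, Nat.cast_one]
  · right
    rw [← a.natCast_zmod_val, h1, Nat.cast_sub (by omega), ZMod.natCast_self, Nat.cast_one,
      zero_sub]

lemma cnu_eq_zero {n : ℕ} (hn : 3 ≤ n) (a : ZMod (2 * n)) (h : cnu n a = 0) :
    a = 0 := by
  haveI : NeZero (2 * n) := ⟨by omega⟩
  have hv := ZMod.val_lt a
  unfold cnu at h
  exact (ZMod.val_eq_zero a).mp (by omega)

lemma key_case {n : ℕ} (hn : 3 ≤ n) (k : ℕ) (hk : 1 ≤ k) (a : ZMod (2 * n))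
    (hpar : cnu n a % 2 = (k + 1) % 2)
    (h1 : k + 1 ≤ cnu n (a - 1)) (h2 : cnu n (a + 1) ≤ k)
    (h3 : k + 1 ≤ cnu n (a + 1 + 1 + 1)) : False := by
  have s1 := cnu_sub_step hn a
  have s2 := cnu_step hn a
  have s3 := cnu_step hn (a + 1)
  have s4 := cnu_step hn (a + 1 + 1)
  have lm : cnu n (a + 1) < cnu n (a + 1 + 1) → cnu n (a + 1) < cnu n a →
      cnu n (a + 1) = 0 := by
    intro u v
    apply cnu_localmin hn (a + 1) u
    rwa [add_sub_cancel_right]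
  have e1 : cnu n a = k + 1 := by omega
  have e2 : cnu n (a + 1) = k := by omega
  have e3 : cnu n (a + 1 + 1) = k + 1 := by omega
  have := lm (by omega) (by omega)
  omega

lemma ccTwo_ne_zero {n : ℕ} (hn : 3 ≤ n) : (2 : ZMod (2 * n)) ≠ 0 := by
  intro h
  have : ((2 : ℕ) : ZMod (2 * n)) = 0 := by exact_mod_cast h
  have := Nat.le_of_dvd (by norm_num) ((ZMod.natCast_eq_zero_iff 2 (2 * n)).mp this)
  omega

lemma ccFour_ne_zero {n : ℕ} (hn : 3 ≤ n) : (4 : ZMod (2 * n)) ≠ 0 := by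
  intro h
  have : ((4 : ℕ) : ZMod (2 * n)) = 0 := by exact_mod_cast h
  have := Nat.le_of_dvd (by norm_num) ((ZMod.natCast_eq_zero_iff 4 (2 * n)).mp this)
  omega

lemma coord_determined {n : ℕ} (hn : 3 ≤ n) (k : ℕ) (hk : 1 ≤ k) (a b : ZMod (2 * n))
    (hpa : cnu n a % 2 = (k + 1) % 2) (ha : cnu n a ≤ k + 1)
    (hAB : ∀ c, ((c = a + 1 ∨ c = a - 1) ∧ cnu n c ≤ k) ↔
      ((c = b + 1 ∨ c = b - 1) ∧ cnu n c ≤ k)) :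
    a = b := by
  have h2 := ccTwo_ne_zero hn
  have h4 := ccFour_ne_zero hn
  obtain ⟨c, hc, hck⟩ := cnu_decrease hn hk a ha
  have hcb := ((hAB c).mp ⟨hc, hck⟩).1
  rcases hc with rfl | rfl
  · rcases hcb with h | h
    · exact add_right_cancel h
    · -- a + 1 = b - 1, so b = a + 2
      have hb : b = a + 1 + 1 := sub_eq_iff_eq_add.mp h.symm
      subst hb
      exfalso
      apply key_case hn k hk a hpa ?_ hck ?_
      · by_contra hlt
        push_neg at hlt
        have hE := ((hAB (a - 1)).mp ⟨Or.inr rfl, by omega⟩).1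
        rcases hE with hE | hE
        · exact h4 (by linear_combination -hE)
        · exact h2 (by linear_combination -hE)
      · by_contra hlt
        push_neg at hlt
        have hE := ((hAB (a + 1 + 1 + 1)).mpr ⟨Or.inl rfl, by omega⟩).1
        rcases hE with hE | hE
        · exact h2 (by linear_combination hE)
        · exact h4 (by linear_combination hE)
  · rcases hcb with h | h
    -- second sub-branch below handles a - 1 = b - 1
    case inr => exact sub_left_inj.mp h
    · -- a - 1 = b + 1, so b = a - 2
      have hb : b = a - 1 - 1 := eq_sub_iff_add_eq.mpr h.symm
      subst hb
      exfalso
      apply key_case hn k hk (-a) (by rwa [cnu_neg hn]) ?_ ?_ ?_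
      · have e : (-a) - 1 = -(a + 1) := by ring
        rw [e, cnu_neg hn]
        by_contra hlt
        push_neg at hlt
        have hE := ((hAB (a + 1)).mp ⟨Or.inl rfl, by omega⟩).1
        rcases hE with hE | hE
        · exact h2 (by linear_combination hE)
        · exact h4 (by linear_combination hE)
      · have e : (-a) + 1 = -(a - 1) := by ring
        rw [e, cnu_neg hn]
        exact hck
      · have e : (-a) + 1 + 1 + 1 = -(a - 1 - 1 - 1) := by ring
        rw [e, cnu_neg hn]
        by_contra hlt
        push_neg at hlt
        have hE := ((hAB (a - 1 - 1 - 1)).mpr ⟨Or.inr rfl, by omega⟩).1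
        rcases hE with hE | hE
        · exact h4 (by linear_combination -hE)
        · exact h2 (by linear_combination -hE)

/-- sup of coordinate cycle-distances. -/
def cD (n m : ℕ) (x : Fin m → ZMod (2 * n)) : ℕ :=
  Finset.univ.sup fun i => cnu n (x i)

lemma le_cD {n m : ℕ} (x : Fin m → ZMod (2 * n)) (i : Fin m) :
    cnu n (x i) ≤ cD n m x := by
  unfold cD
  exact Finset.le_sup (f := fun j => cnu n (x j)) (Finset.mem_univ i)

lemma cD_le {n m k : ℕ} (x : Fin m → ZMod (2 * n)) (h : ∀ i, cnu n (x i) ≤ k) :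
    cD n m x ≤ k := by
  unfold cD
  exact Finset.sup_le (f := fun j => cnu n (x j)) fun i _ => h i

/-- Let `n ≥ 3`, `m ≥ 1`, and let `Γ` be the connected component
containing `v = (0,…,0)` of the tensor product of `m` cycles of length `2n`.
If an automorphism of `Γ` fixes `v` and all `2^m` neighbours `(±1,…,±1)` of `v`,
then it is the identity. -/
theorem cycle_tensor_component_rigid (n m : ℕ) (hn : 3 ≤ n) (hm : 1 ≤ m)
    (φ : (cycleTensorComp n m) ≃g (cycleTensorComp n m))
    (hfix : ∀ x : ((cycleTensor n m).connectedComponentMk 0).supp,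
      ((x : Fin m → ZMod (2 * n)) = 0 ∨
        (∀ i, (x : Fin m → ZMod (2 * n)) i = 1 ∨ (x : Fin m → ZMod (2 * n)) i = -1)) →
      φ x = x) :
    ∀ x, φ x = x := by
  classical
  haveI : NeZero (2 * n) := ⟨by omega⟩
  haveI : Fact (1 < 2 * n) := ⟨by omega⟩
  have i0 : Fin m := ⟨0, hm⟩
  -- adjacency characterization
  have adj_iff : ∀ x u : Fin m → ZMod (2 * n), (cycleTensor n m).Adj x u ↔
      ∀ i, u i = x i + 1 ∨ u i = x i - 1 := by
    intro x u
    change (x ≠ u ∧ ∀ i, x i - u i = 1 ∨ x i - u i = -1) ↔ _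
    constructor
    · rintro ⟨-, hs⟩ i
      rcases hs i with h | h
      · right; linear_combination -h
      · left; linear_combination -h
    · intro h
      refine ⟨fun he => ?_, fun i => ?_⟩
      · rcases h i0 with hh | hh <;> rw [← he] at hh
        · exact one_ne_zero (α := ZMod (2 * n)) (by linear_combination -hh)
        · exact one_ne_zero (α := ZMod (2 * n)) (by linear_combination hh)
      · rcases h i with hh | hh
        · right; linear_combination -hh
        · left; linear_combination -hh
  -- adjacency in the induced graph
  have adjΓ : ∀ a b : (((cycleTensor n m).connectedComponentMk 0).supp),
      (cycleTensorComp n m).Adj a b ↔ (cycleTensor n m).Adj (a : Fin m → ZMod (2 * n)) b :=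
    fun a b => Iff.rfl
  -- neighbours of component members are in the component
  have mem_adj : ∀ x u : Fin m → ZMod (2 * n), (cycleTensor n m).Adj x u →
      x ∈ (((cycleTensor n m).connectedComponentMk 0).supp) →
      u ∈ (((cycleTensor n m).connectedComponentMk 0).supp) := by
    intro x u ha hx
    rw [SimpleGraph.ConnectedComponent.mem_supp_iff] at hx ⊢
    rw [← hx]
    exact SimpleGraph.ConnectedComponent.connectedComponentMk_eq_of_adj ha.symm
  -- parity is uniform on the component
  have flip : ∀ a b : ZMod (2 * n), (a - b = 1 ∨ a - b = -1) →
      cnu n a % 2 ≠ cnu n b % 2 := by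
    intro a b hab
    have h1 := cnu_step hn b
    have h2 := cnu_sub_step hn b
    rcases hab with h | h
    · have e : a = b + 1 := by linear_combination h
      rw [e]; omega
    · have e : a = b - 1 := by linear_combination h
      rw [e]; omega
  have walkP : ∀ (u v : Fin m → ZMod (2 * n)), (cycleTensor n m).Walk u v →
      (∀ i j, cnu n (v i) % 2 = cnu n (v j) % 2) →
      (∀ i j, cnu n (u i) % 2 = cnu n (u j) % 2) := by
    intro u v w
    induction w with
    | nil => exact id
    | @cons u u' v h p ih =>
      intro hv i j
      have hu' := ih hv
      obtain ⟨-, hstep⟩ : u ≠ u' ∧ ∀ i, u i - u' i = 1 ∨ u i - u' i = -1 := h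
      have hi := flip _ _ (hstep i)
      have hj := flip _ _ (hstep j)
      have := hu' i j
      omega
  have par : ∀ x : Fin m → ZMod (2 * n),
      x ∈ (((cycleTensor n m).connectedComponentMk 0).supp) →
      ∀ i j, cnu n (x i) % 2 = cnu n (x j) % 2 := by
    intro x hx i j
    rw [SimpleGraph.ConnectedComponent.mem_supp_iff, SimpleGraph.ConnectedComponent.eq] at hx
    obtain ⟨w⟩ := hx
    exact walkP x 0 w (fun i j => rfl) i j
  -- the main induction on the radius
  have main : ∀ (k : ℕ) (x : (((cycleTensor n m).connectedComponentMk 0).supp)),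
      cD n m (x : Fin m → ZMod (2 * n)) ≤ k → φ x = x := by
    intro k
    induction k with
    | zero =>
      intro x hx
      apply hfix
      left
      funext i
      have h0 : cnu n ((x : Fin m → ZMod (2 * n)) i) = 0 :=
        Nat.le_antisymm (le_trans (le_cD _ i) hx) (Nat.zero_le _)
      exact cnu_eq_zero hn _ h0
    | succ k ih =>
      intro x hx
      by_cases hxk : cD n m (x : Fin m → ZMod (2 * n)) ≤ k
      · exact ih x hxk
      have hxk1 : cD n m (x : Fin m → ZMod (2 * n)) = k + 1 := le_antisymm hx (by omega)
      have hcle : ∀ i, cnu n ((x : Fin m → ZMod (2 * n)) i) ≤ k + 1 := fun i =>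
        le_trans (le_cD _ i) (le_of_eq hxk1)
      obtain ⟨imax, -, himax⟩ :=
        Finset.exists_mem_eq_sup Finset.univ ⟨i0, Finset.mem_univ i0⟩
          (fun i => cnu n ((x : Fin m → ZMod (2 * n)) i))
      have hmax : cnu n ((x : Fin m → ZMod (2 * n)) imax) = k + 1 := by
        rw [← himax]; exact hxk1
      have hpar : ∀ i, cnu n ((x : Fin m → ZMod (2 * n)) i) % 2 = (k + 1) % 2 := by
        intro i
        rw [par (x : Fin m → ZMod (2 * n)) x.2 i imax, hmax]
      rcases Nat.eq_zero_or_pos k with rfl | hk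
      · -- radius 1 : all coordinates are ±1
        apply hfix
        right
        intro i
        have h1 : cnu n ((x : Fin m → ZMod (2 * n)) i) = 1 := by
          have := hpar i; have := hcle i; omega
        exact cnu_eq_one hn _ h1
      · -- main step
        -- neighbours with cD ≤ k, as a product set
        have hprod : ∀ y u : Fin m → ZMod (2 * n),
            ((cycleTensor n m).Adj y u ∧ cD n m u ≤ k) ↔
            ∀ i, (u i = y i + 1 ∨ u i = y i - 1) ∧ cnu n (u i) ≤ k := by
          intro y u
          rw [adj_iff]
          constructor
          · rintro ⟨h1, h2⟩ i
            exact ⟨h1 i, le_trans (le_cD _ i) h2⟩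
          · intro h
            exact ⟨fun i => (h i).1, cD_le _ fun i => (h i).2⟩
        -- neighbour sets with cD ≤ k agree for x and φ x
        have hS : ∀ u : Fin m → ZMod (2 * n),
            ((cycleTensor n m).Adj (x : Fin m → ZMod (2 * n)) u ∧ cD n m u ≤ k) ↔
            ((cycleTensor n m).Adj ((φ x : (((cycleTensor n m).connectedComponentMk 0).supp)) :
              Fin m → ZMod (2 * n)) u ∧ cD n m u ≤ k) := by
          intro u
          constructor
          · rintro ⟨ha, hd⟩
            have hu : u ∈ (((cycleTensor n m).connectedComponentMk 0).supp) :=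
              mem_adj _ u ha x.2
            have hfu : φ ⟨u, hu⟩ = ⟨u, hu⟩ := ih ⟨u, hu⟩ hd
            have h2 := φ.map_adj_iff.mpr ((adjΓ x ⟨u, hu⟩).mpr ha)
            rw [hfu] at h2
            exact ⟨(adjΓ _ _).mp h2, hd⟩
          · rintro ⟨ha, hd⟩
            have hu : u ∈ (((cycleTensor n m).connectedComponentMk 0).supp) :=
              mem_adj _ u ha (φ x).2
            have hfu : φ ⟨u, hu⟩ = ⟨u, hu⟩ := ih ⟨u, hu⟩ hd
            have hfu' : φ.symm ⟨u, hu⟩ = ⟨u, hu⟩ := by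
              conv_lhs => rw [← hfu]
              exact φ.symm_apply_apply _
            have h2 := φ.symm.map_adj_iff.mpr ((adjΓ (φ x) ⟨u, hu⟩).mpr ha)
            rw [hfu', φ.symm_apply_apply] at h2
            exact ⟨(adjΓ _ _).mp h2, hd⟩
        -- nonempty coordinate neighbour sets
        have hAne : ∀ i, ∃ c, (c = (x : Fin m → ZMod (2 * n)) i + 1 ∨
            c = (x : Fin m → ZMod (2 * n)) i - 1) ∧ cnu n c ≤ k :=
          fun i => cnu_decrease hn hk _ (hcle i)
        -- projections
        have hsub : ∀ (y z : Fin m → ZMod (2 * n)),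
            (∀ u : Fin m → ZMod (2 * n), ((∀ i, (u i = y i + 1 ∨ u i = y i - 1) ∧ cnu n (u i) ≤ k) →
              (∀ i, (u i = z i + 1 ∨ u i = z i - 1) ∧ cnu n (u i) ≤ k))) →
            (∀ j, ∃ c, (c = y j + 1 ∨ c = y j - 1) ∧ cnu n c ≤ k) →
            ∀ i c, ((c = y i + 1 ∨ c = y i - 1) ∧ cnu n c ≤ k) →
              ((c = z i + 1 ∨ c = z i - 1) ∧ cnu n c ≤ k) := by
          intro y z hSS hne i c hc
          choose d hd using hne
          have hu : ∀ j, ((Function.update d i c) j = y j + 1 ∨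
              (Function.update d i c) j = y j - 1) ∧ cnu n ((Function.update d i c) j) ≤ k := by
            intro j
            by_cases hji : j = i
            · subst hji; rw [Function.update_self]; exact hc
            · rw [Function.update_of_ne hji]; exact hd j
          have := hSS (Function.update d i c) hu i
          rwa [Function.update_self] at this
        set x' : Fin m → ZMod (2 * n) :=
          ((φ x : (((cycleTensor n m).connectedComponentMk 0).supp)) : Fin m → ZMod (2 * n))
          with hx'
        have h1 : ∀ i c, ((c = (x : Fin m → ZMod (2 * n)) i + 1 ∨
            c = (x : Fin m → ZMod (2 * n)) i - 1) ∧ cnu n c ≤ k) →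
            ((c = x' i + 1 ∨ c = x' i - 1) ∧ cnu n c ≤ k) := by
          apply hsub
          · intro u hu
            exact (hprod x' u).mp ((hS u).mp ((hprod _ u).mpr hu))
          · exact hAne
        have hAne' : ∀ j, ∃ c, (c = x' j + 1 ∨ c = x' j - 1) ∧ cnu n c ≤ k :=
          fun j => (hAne j).elim fun c hc => ⟨c, h1 j c hc⟩
        have h2 : ∀ i c, ((c = x' i + 1 ∨ c = x' i - 1) ∧ cnu n c ≤ k) →
            ((c = (x : Fin m → ZMod (2 * n)) i + 1 ∨
              c = (x : Fin m → ZMod (2 * n)) i - 1) ∧ cnu n c ≤ k) := by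
          apply hsub
          · intro u hu
            exact (hprod _ u).mp ((hS u).mpr ((hprod x' u).mpr hu))
          · exact hAne'
        have hco : ∀ i, (x : Fin m → ZMod (2 * n)) i = x' i := by
          intro i
          exact coord_determined hn k hk _ _ (hpar i) (hcle i)
            (fun c => ⟨fun h => h1 i c h, fun h => h2 i c h⟩)
        exact (Subtype.ext (funext fun i => (hco i).symm))
  intro x
  exact main (cD n m (x : Fin m → ZMod (2 * n))) x le_rfl
end

section
/- In the tensor product of m cycles of length 2n (n ≥ 3), two neighbours of the vertex v = (0,…,0) that differ in exactly k coordinates have exactly 2^{m−k} common neighbours; in particular, two neighbours of v differ in exactly one coordinate if and only if they have 2^{m−1} common neighbours. -/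
/-- In the tensor product of `m` cycles of length `2n` (`n ≥ 3`),
two neighbours of the vertex `v = (0,…,0)` (i.e. vertices `(±1,…,±1)`) that differ
in exactly `k` coordinates have exactly `2^(m−k)` common neighbours; in particular,
two neighbours of `v` differ in exactly one coordinate if and only if they have
`2^(m−1)` common neighbours. -/
theorem cycle_tensor_common_neighbours (n m k : ℕ) (hn : 3 ≤ n) (hm : 1 ≤ m)
    (s t : Fin m → ZMod (2 * n))
    (hs : ∀ i, s i = 1 ∨ s i = -1) (ht : ∀ i, t i = 1 ∨ t i = -1)
    (hk : (Finset.univ.filter fun i => s i ≠ t i).card = k) :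
    Nat.card {x : Fin m → ZMod (2 * n) //
        (cycleTensor n m).Adj s x ∧ (cycleTensor n m).Adj t x} = 2 ^ (m - k) ∧
    (k = 1 ↔
      Nat.card {x : Fin m → ZMod (2 * n) //
        (cycleTensor n m).Adj s x ∧ (cycleTensor n m).Adj t x} = 2 ^ (m - 1)) := by
  classical
  haveI : NeZero (2*n) := ⟨by omega⟩
  have hdvd : ∀ a : ℕ, 0 < a → a < 2*n → ((a : ZMod (2*n)) ≠ 0) := by
    intro a ha h2 h
    rw [ZMod.natCast_eq_zero_iff] at h
    have := Nat.le_of_dvd ha h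
    omega
  have h1z : (1 : ZMod (2*n)) ≠ 0 := by
    have := hdvd 1 (by omega) (by omega); exact_mod_cast this
  have h2z : (2 : ZMod (2*n)) ≠ 0 := by
    have := hdvd 2 (by omega) (by omega); exact_mod_cast this
  have h4z : (4 : ZMod (2*n)) ≠ 0 := by
    have := hdvd 4 (by omega) (by omega); exact_mod_cast this
  set S : Fin m → Finset (ZMod (2*n)) :=
    fun i => if s i = t i then {s i - 1, s i + 1} else {0} with hSdef
  have key : ∀ x : Fin m → ZMod (2*n),
      ((cycleTensor n m).Adj s x ∧ (cycleTensor n m).Adj t x) ↔ ∀ i, x i ∈ S i := by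
    intro x
    constructor
    · change ((s ≠ x ∧ ∀ i, s i - x i = 1 ∨ s i - x i = -1) ∧ (t ≠ x ∧ ∀ i, t i - x i = 1 ∨ t i - x i = -1)) → _
      rintro ⟨⟨-, hsx⟩, ⟨-, htx⟩⟩ i
      by_cases hst : s i = t i
      · simp only [hSdef, if_pos hst, Finset.mem_insert, Finset.mem_singleton]
        rcases hsx i with h | h
        · left; linear_combination -h
        · right; linear_combination -h
      · simp only [hSdef, if_neg hst, Finset.mem_singleton]
        have a := hsx i; have b := htx i
        rcases hs i with h1 | h1 <;> rcases ht i with h2 | h2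
        · exact absurd (h1.trans h2.symm) hst
        · rcases a with a | a <;> rcases b with b | b
          · exact absurd (show (2:ZMod (2*n)) = 0 by linear_combination a - b - h1 + h2) h2z
          · linear_combination -a + h1
          · exact absurd (show (4:ZMod (2*n)) = 0 by linear_combination a - b - h1 + h2) h4z
          · exact absurd (show (2:ZMod (2*n)) = 0 by linear_combination a - b - h1 + h2) h2z
        · rcases a with a | a <;> rcases b with b | b
          · exact absurd (show (2:ZMod (2*n)) = 0 by linear_combination -a + b + h1 - h2) h2z
          · exact absurd (show (4:ZMod (2*n)) = 0 by linear_combination -a + b + h1 - h2) h4z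
          · linear_combination -a + h1
          · exact absurd (show (2:ZMod (2*n)) = 0 by linear_combination -a + b + h1 - h2) h2z
        · exact absurd (h1.trans h2.symm) hst
    · intro hmem
      have hx : ∀ i, (s i - x i = 1 ∨ s i - x i = -1) ∧ (t i - x i = 1 ∨ t i - x i = -1)
          ∧ x i ≠ s i ∧ x i ≠ t i := by
        intro i
        have hi := hmem i
        by_cases hst : s i = t i
        · simp only [hSdef, if_pos hst, Finset.mem_insert, Finset.mem_singleton] at hi
          rcases hi with h | h
          · refine ⟨Or.inl (by linear_combination -h), Or.inl (by rw [← hst]; linear_combination -h),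
              fun he => h1z (by linear_combination h - he),
              fun he => h1z (by linear_combination h - he + hst)⟩
          · refine ⟨Or.inr (by linear_combination -h), Or.inr (by rw [← hst]; linear_combination -h),
              fun he => h1z (by linear_combination he - h),
              fun he => h1z (by linear_combination he - h - hst)⟩
        · simp only [hSdef, if_neg hst, Finset.mem_singleton] at hi
          refine ⟨?_, ?_, ?_, ?_⟩
          · rcases hs i with h1 | h1
            · exact Or.inl (by linear_combination h1 - hi)
            · exact Or.inr (by linear_combination h1 - hi)
          · rcases ht i with h2 | h2
            · exact Or.inl (by linear_combination h2 - hi)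
            · exact Or.inr (by linear_combination h2 - hi)
          · intro he
            rcases hs i with h1 | h1
            · exact h1z (by linear_combination -h1 + hi - he)
            · exact h1z (by linear_combination h1 + he - hi)
          · intro he
            rcases ht i with h2 | h2
            · exact h1z (by linear_combination -h2 + hi - he)
            · exact h1z (by linear_combination h2 + he - hi)
      have i0 : Fin m := ⟨0, hm⟩
      change ((s ≠ x ∧ ∀ i, s i - x i = 1 ∨ s i - x i = -1) ∧ (t ≠ x ∧ ∀ i, t i - x i = 1 ∨ t i - x i = -1))
      refine ⟨⟨fun h => (hx i0).2.2.1 (congrFun h i0).symm, fun i => (hx i).1⟩,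
        ⟨fun h => (hx i0).2.2.2 (congrFun h i0).symm, fun i => (hx i).2.1⟩⟩
  have hkm : k ≤ m := by
    rw [← hk]
    exact le_trans (Finset.card_filter_le _ _) (by simp)
  have hfilter : (Finset.univ.filter fun i => s i = t i).card = m - k := by
    have h := Finset.card_filter_add_card_filter_not
      (s := (Finset.univ : Finset (Fin m))) (p := fun i => s i = t i)
    simp only [Finset.card_univ, Fintype.card_fin, ne_eq] at h hk
    omega
  have hcount : Nat.card {x : Fin m → ZMod (2*n) //
      (cycleTensor n m).Adj s x ∧ (cycleTensor n m).Adj t x} = 2 ^ (m - k) := by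
    rw [Nat.card_eq_fintype_card, Fintype.card_subtype]
    have heq : (Finset.univ.filter fun x =>
        (cycleTensor n m).Adj s x ∧ (cycleTensor n m).Adj t x) = Fintype.piFinset S := by
      ext x
      simp only [Finset.mem_filter, Finset.mem_univ, true_and, Fintype.mem_piFinset]
      exact key x
    rw [heq, Fintype.card_piFinset]
    have hS : ∀ i, (S i).card = if s i = t i then 2 else 1 := by
      intro i
      by_cases hst : s i = t i
      · simp only [hSdef, if_pos hst]
        rw [Finset.card_pair]
        intro h
        exact h2z (by linear_combination -h)
      · simp [hSdef, hst]
    rw [Finset.prod_congr rfl (fun i _ => hS i), Finset.prod_ite, Finset.prod_const,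
      Finset.prod_const, one_pow, mul_one]
    rw [hfilter]
  refine ⟨hcount, ?_, ?_⟩
  · rintro rfl; exact hcount
  · intro h
    rw [hcount] at h
    have := Nat.pow_right_injective (le_refl 2) h
    omega
end
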